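/- Let n ≥ 2, let a₀, a₁, …, aₙ, b : ℝ → ℝ be differentiable with a₀(t) ≠ 0 for all t, and define X : ℝ × ℝⁿ → ℝⁿ by Xⁱ(t,x) = xⁱ⁺¹ for i = 1,…,n−1 and Xⁿ(t,x) = b(t)/a₀(t) − Σ_{j=1}^{n} (a_{n−j+1}(t)/a₀(t))·xʲ. Then the temporal torsion components R_{(1)1j}^{(i)}(t,x) = (1/2)[ ∂/∂xʲ(∂Xⁱ/∂t)(t,x) − ∂/∂xⁱ(∂Xʲ/∂t)(t,x) ] produced by this system are all zero except those with an index equal to n, and for every i = 1,…,n−1, R_{(1)1n}^{(i)}(t,x) = −R_{(1)1i}^{(n)}(t,x) = (a'_{n−i+1}(t)·a₀(t) − a_{n−i+1}(t)·a₀'(t)) / (2·a₀(t)²), where ' denotes the derivative with respect to t. -/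

import Mathlib

/-- Partial derivative of `g : ℝⁿ → ℝ` at `x` in the `j`-th coordinate direction. -/
noncomputable def pd {n : ℕ} (g : (Fin n → ℝ) → ℝ) (x : Fin n → ℝ) (j : Fin n) : ℝ :=
  fderiv ℝ g x (Pi.single j 1)

/-- The temporal torsion components produced by the first-order ODE system
`dxⁱ/dt = Xⁱ(t,x)`:
`R_{(1)1j}^{(i)}(t,x) = (1/2)[∂/∂xʲ(∂Xⁱ/∂t) - ∂/∂xⁱ(∂Xʲ/∂t)]`. -/
noncomputable def temporalTorsion {n : ℕ} (X : ℝ → (Fin n → ℝ) → Fin n → ℝ)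
    (t : ℝ) (x : Fin n → ℝ) (i j : Fin n) : ℝ :=
  (1 / 2) * (pd (fun y => deriv (fun s => X s y i) t) x j
           - pd (fun y => deriv (fun s => X s y j) t) x i)

/-- The first-order system associated to the superior order ODE
`y⁽ⁿ⁾ = f(t, y, y', …, y⁽ⁿ⁻¹⁾)` via `x¹ = y, …, xⁿ = y⁽ⁿ⁻¹⁾` (0-based indexing):
`Xⁱ(t,x) = xⁱ⁺¹` for `i < n-1` and `Xⁿ⁻¹(t,x) = f(t,x)`. -/
def sodeX (n : ℕ) (f : ℝ → (Fin n → ℝ) → ℝ) : ℝ → (Fin n → ℝ) → Fin n → ℝ :=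
  fun t x i => if h : (i : ℕ) + 1 < n then x ⟨(i : ℕ) + 1, h⟩ else f t x

lemma pd_affine' {n : ℕ} (C : ℝ) (d : Fin n → ℝ) (x : Fin n → ℝ) (i : Fin n) :
    fderiv ℝ (fun y : Fin n → ℝ => C - ∑ j, d j * y j) x (Pi.single i 1) = - d i := by
  have key : (fun y : Fin n → ℝ => C - ∑ j, d j * y j)
      = fun y => C - (∑ j, d j • (ContinuousLinearMap.proj j : (Fin n → ℝ) →L[ℝ] ℝ)) y := by
    funext y
    simp [ContinuousLinearMap.sum_apply]
  have hL : HasFDerivAt (fun y : Fin n → ℝ => C - ∑ j, d j * y j)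
      ((0 : (Fin n → ℝ) →L[ℝ] ℝ)
        - (∑ j, d j • (ContinuousLinearMap.proj j : (Fin n → ℝ) →L[ℝ] ℝ))) x := by
    rw [key]
    exact (hasFDerivAt_const C x).sub
      ((∑ j, d j • (ContinuousLinearMap.proj j : (Fin n → ℝ) →L[ℝ] ℝ)).hasFDerivAt)
  rw [hL.fderiv]
  simp [ContinuousLinearMap.sum_apply, Pi.single_apply, mul_ite, Finset.sum_ite_eq']

/-- for the non-homogeneous linear ODE of order `n`
`a₀ y⁽ⁿ⁾ + a₁ y⁽ⁿ⁻¹⁾ + … + aₙ y = b` with differentiable coefficients and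
`a₀(t) ≠ 0`, reduced to a first-order system, the temporal torsion components are
all zero except those with an index equal to `n` (1-based), and for `i = 1,…,n-1`
(1-based, i.e. 0-based indices `i` with `i + 1 < n`, where the 1-based coefficient
index `n - i + 1` becomes the 0-based `n - i`),
`R_{(1)1n}^{(i)} = -R_{(1)1i}^{(n)} = (a'_{n-i+1} a₀ - a_{n-i+1} a₀') / (2 a₀²)`. -/
theorem temporal_torsion_of_nonhomogeneous_linear_superior_order_ode
    (n : ℕ) (hn : 2 ≤ n)
    (a : Fin (n + 1) → ℝ → ℝ) (b : ℝ → ℝ)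
    (ha : ∀ k : Fin (n + 1), Differentiable ℝ (a k))
    (hb : Differentiable ℝ b)
    (h0 : ∀ t : ℝ, a 0 t ≠ 0) :
    ∀ (t : ℝ) (x : Fin n → ℝ),
      (∀ i j : Fin n, (i : ℕ) + 1 < n → (j : ℕ) + 1 < n →
        temporalTorsion (sodeX n (fun t x => b t / a 0 t
            - ∑ j : Fin n, (a ⟨n - (j : ℕ), by omega⟩ t / a 0 t) * x j))
          t x i j = 0) ∧
      (∀ i : Fin n, (i : ℕ) + 1 < n →
        temporalTorsion (sodeX n (fun t x => b t / a 0 t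
            - ∑ j : Fin n, (a ⟨n - (j : ℕ), by omega⟩ t / a 0 t) * x j))
          t x i ⟨n - 1, by omega⟩
          = (deriv (a ⟨n - (i : ℕ), by omega⟩) t * a 0 t
              - a ⟨n - (i : ℕ), by omega⟩ t * deriv (a 0) t) / (2 * (a 0 t) ^ 2) ∧
        temporalTorsion (sodeX n (fun t x => b t / a 0 t
            - ∑ j : Fin n, (a ⟨n - (j : ℕ), by omega⟩ t / a 0 t) * x j))
          t x ⟨n - 1, by omega⟩ i
          = -((deriv (a ⟨n - (i : ℕ), by omega⟩) t * a 0 t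
              - a ⟨n - (i : ℕ), by omega⟩ t * deriv (a 0) t) / (2 * (a 0 t) ^ 2))) := by
  intro t x
  set f : ℝ → (Fin n → ℝ) → ℝ := fun t x => b t / a 0 t
      - ∑ j : Fin n, (a ⟨n - (j : ℕ), by omega⟩ t / a 0 t) * x j with hf
  -- derivative in t of a constant component
  have hconst : ∀ (i : Fin n), (i : ℕ) + 1 < n →
      (fun y : Fin n → ℝ => deriv (fun s => sodeX n f s y i) t) = fun _ => 0 := by
    intro i hi
    funext y
    simp only [sodeX, dif_pos hi, deriv_const]
  -- the last-component derivative in t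
  have hq : ∀ j : Fin n, DifferentiableAt ℝ (fun s => a ⟨n - (j : ℕ), by omega⟩ s / a 0 s) t :=
    fun j => ((ha _).differentiableAt).div ((ha 0).differentiableAt) (h0 t)
  have hlast : (fun y : Fin n → ℝ => deriv (fun s => sodeX n f s y ⟨n - 1, by omega⟩) t)
      = fun y => deriv (fun s => b s / a 0 s) t
          - ∑ j : Fin n, deriv (fun s => a ⟨n - (j : ℕ), by omega⟩ s / a 0 s) t * y j := by
    funext y
    have hne : ¬ ((⟨n - 1, by omega⟩ : Fin n) : ℕ) + 1 < n := by simp; omega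
    simp only [sodeX, dif_neg hne, hf]
    rw [deriv_fun_sub, deriv_fun_sum]
    · congr 1
      refine Finset.sum_congr rfl fun j _ => ?_
      exact deriv_mul_const (hq j) (y j)
    · exact fun j _ => (hq j).mul_const (y j)
    · exact (hb.differentiableAt).div ((ha 0).differentiableAt) (h0 t)
    · exact DifferentiableAt.fun_sum fun j _ => (hq j).mul_const (y j)
  have hpd0 : ∀ (i j : Fin n), (i : ℕ) + 1 < n →
      pd (fun y : Fin n → ℝ => deriv (fun s => sodeX n f s y i) t) x j = 0 := by
    intro i j hi
    rw [hconst i hi]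
    simp [pd]
  have hpdlast : ∀ i : Fin n,
      pd (fun y : Fin n → ℝ => deriv (fun s => sodeX n f s y ⟨n - 1, by omega⟩) t) x i
        = - deriv (fun s => a ⟨n - (i : ℕ), by omega⟩ s / a 0 s) t := by
    intro i
    rw [hlast]
    exact pd_affine' _ _ x i
  have hd : ∀ i : Fin n, deriv (fun s => a ⟨n - (i : ℕ), by omega⟩ s / a 0 s) t
      = (deriv (a ⟨n - (i : ℕ), by omega⟩) t * a 0 t
          - a ⟨n - (i : ℕ), by omega⟩ t * deriv (a 0) t) / (a 0 t) ^ 2 := by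
    intro i
    exact deriv_div ((ha _).differentiableAt) ((ha 0).differentiableAt) (h0 t)
  constructor
  · intro i j hi hj
    simp only [temporalTorsion, hpd0 i j hi, hpd0 j i hj, sub_zero, mul_zero, sub_self]
  · intro i hi
    constructor
    · simp only [temporalTorsion, hpd0 i _ hi, hpdlast i, hd i]
      have := h0 t
      field_simp
      ring
    · simp only [temporalTorsion, hpd0 i _ hi, hpdlast i, hd i]
      have := h0 t
      field_simp
      ring
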